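/- Let X, Y, Z be twice continuously differentiable functions on open intervals I, J, K ⊆ ℝ, H ∈ ℝ, and suppose X(u)+Y(v)+Z(w) > 0 and (X(u)+Y(v))Z'(w) + (X'(u)+Y'(v))Z(w) + X'(u)Y(v) + X(u)Y'(v) = −4H(X(u)+Y(v)+Z(w))^{3/2} hold for all u ∈ I, v ∈ J, w ∈ K with u+v+w = 0. Then for all such triples (u,v,w): (X'(u)−Y'(v))Z'(w) + (X''(u)−Y''(v))Z(w) + X''(u)Y(v) − X(u)Y''(v) = −6H(X'(u)−Y'(v))(X(u)+Y(v)+Z(w))^{1/2}. -/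

import Mathlib

/-- Differentiating the transformed CMC equation along the constraint `u + v + w = 0`
yields `(X'−Y')Z' + (X''−Y'')Z + X''Y − XY'' = −6H(X'−Y')(X+Y+Z)^{1/2}`. -/
theorem stmt_9 (aI bI aJ bJ aK bK H : ℝ) (X Y Z : ℝ → ℝ)
    (hX : ContDiffOn ℝ 2 X (Set.Ioo aI bI))
    (hY : ContDiffOn ℝ 2 Y (Set.Ioo aJ bJ))
    (hZ : ContDiffOn ℝ 2 Z (Set.Ioo aK bK))
    (hpos : ∀ u ∈ Set.Ioo aI bI, ∀ v ∈ Set.Ioo aJ bJ, ∀ w ∈ Set.Ioo aK bK,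
      u + v + w = 0 → X u + Y v + Z w > 0)
    (heq : ∀ u ∈ Set.Ioo aI bI, ∀ v ∈ Set.Ioo aJ bJ, ∀ w ∈ Set.Ioo aK bK,
      u + v + w = 0 →
      (X u + Y v) * deriv Z w + (deriv X u + deriv Y v) * Z w
          + deriv X u * Y v + X u * deriv Y v
        = -4 * H * (X u + Y v + Z w) ^ ((3 : ℝ) / 2)) :
    ∀ u ∈ Set.Ioo aI bI, ∀ v ∈ Set.Ioo aJ bJ, ∀ w ∈ Set.Ioo aK bK,
      u + v + w = 0 →
      (deriv X u - deriv Y v) * deriv Z w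
          + (deriv (deriv X) u - deriv (deriv Y) v) * Z w
          + deriv (deriv X) u * Y v - X u * deriv (deriv Y) v
        = -6 * H * (deriv X u - deriv Y v) * (X u + Y v + Z w) ^ ((1 : ℝ) / 2) := by
  intro u hu v hv w hw hsum
  -- regularity of the derivatives
  have hX1 : ContDiffOn ℝ 1 (deriv X) (Set.Ioo aI bI) := by
    exact hX.deriv_of_isOpen isOpen_Ioo (by norm_num)
  have hY1 : ContDiffOn ℝ 1 (deriv Y) (Set.Ioo aJ bJ) := by
    exact hY.deriv_of_isOpen isOpen_Ioo (by norm_num)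
  have hXd : DifferentiableAt ℝ X u :=
    (hX.contDiffAt (isOpen_Ioo.mem_nhds hu)).differentiableAt (by norm_num)
  have hYd : DifferentiableAt ℝ Y v :=
    (hY.contDiffAt (isOpen_Ioo.mem_nhds hv)).differentiableAt (by norm_num)
  have hXd2 : DifferentiableAt ℝ (deriv X) u :=
    (hX1.contDiffAt (isOpen_Ioo.mem_nhds hu)).differentiableAt (by norm_num)
  have hYd2 : DifferentiableAt ℝ (deriv Y) v :=
    (hY1.contDiffAt (isOpen_Ioo.mem_nhds hv)).differentiableAt (by norm_num)
  -- inner affine maps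
  have hu1 : HasDerivAt (fun t : ℝ => u + t) 1 0 := by
    simpa using (hasDerivAt_id (0:ℝ)).const_add u
  have hv1 : HasDerivAt (fun t : ℝ => v - t) (-1) 0 := by
    simpa using (hasDerivAt_id (0:ℝ)).const_sub v
  -- compositions
  have hXat : HasDerivAt X (deriv X u) (u + (0:ℝ)) := by
    simpa using hXd.hasDerivAt
  have hYat : HasDerivAt Y (deriv Y v) (v - (0:ℝ)) := by
    simpa using hYd.hasDerivAt
  have hXat2 : HasDerivAt (deriv X) (deriv (deriv X) u) (u + (0:ℝ)) := by
    simpa using hXd2.hasDerivAt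
  have hYat2 : HasDerivAt (deriv Y) (deriv (deriv Y) v) (v - (0:ℝ)) := by
    simpa using hYd2.hasDerivAt
  have hXc : HasDerivAt (fun t => X (u + t)) (deriv X u) 0 := by
    have := (hXat.comp 0 hu1 :
      HasDerivAt (fun t => X (u + t)) (deriv X u * 1) 0)
    exact this.congr_deriv (by ring)
  have hYc : HasDerivAt (fun t => Y (v - t)) (-(deriv Y v)) 0 := by
    have := (hYat.comp 0 hv1 :
      HasDerivAt (fun t => Y (v - t)) (deriv Y v * (-1)) 0)
    exact this.congr_deriv (by ring)
  have hXc2 : HasDerivAt (fun t => deriv X (u + t)) (deriv (deriv X) u) 0 := by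
    have := (hXat2.comp 0 hu1 :
      HasDerivAt (fun t => deriv X (u + t)) (deriv (deriv X) u * 1) 0)
    exact this.congr_deriv (by ring)
  have hYc2 : HasDerivAt (fun t => deriv Y (v - t)) (-(deriv (deriv Y) v)) 0 := by
    have := (hYat2.comp 0 hv1 :
      HasDerivAt (fun t => deriv Y (v - t)) (deriv (deriv Y) v * (-1)) 0)
    exact this.congr_deriv (by ring)
  -- the left-hand side function and its derivative
  set D1 : ℝ := (deriv X u - deriv Y v) * deriv Z w
      + (deriv (deriv X) u - deriv (deriv Y) v) * Z w
      + deriv (deriv X) u * Y v - X u * deriv (deriv Y) v with hD1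
  have hF : HasDerivAt (fun t =>
      (X (u + t) + Y (v - t)) * deriv Z w + (deriv X (u + t) + deriv Y (v - t)) * Z w
        + deriv X (u + t) * Y (v - t) + X (u + t) * deriv Y (v - t)) D1 0 := by
    have h := ((((hXc.add hYc).mul_const (deriv Z w)).add
        ((hXc2.add hYc2).mul_const (Z w))).add
        (hXc2.mul hYc)).add (hXc.mul hYc2)
    simp only [add_zero, sub_zero] at h
    exact h.congr_deriv (by rw [hD1]; ring)
  -- positivity and derivative of the right-hand side
  have hS : X u + Y v + Z w > 0 := hpos u hu v hv w hw hsum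
  have hSd : HasDerivAt (fun t => X (u + t) + Y (v - t) + Z w)
      (deriv X u - deriv Y v) 0 := by
    have := (hXc.add hYc).add_const (Z w)
    simpa [sub_eq_add_neg] using this
  have hG : HasDerivAt (fun t => -4 * H * (X (u + t) + Y (v - t) + Z w) ^ ((3:ℝ)/2))
      (-6 * H * (deriv X u - deriv Y v) * (X u + Y v + Z w) ^ ((1:ℝ)/2)) 0 := by
    have h := (hSd.rpow_const (p := (3:ℝ)/2)
      (Or.inl (by simpa using hS.ne'))).const_mul (-4 * H)
    simp only [add_zero, sub_zero] at h
    exact h.congr_deriv (by rw [show (3:ℝ)/2 - 1 = 1/2 by norm_num]; ring)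
  -- the two functions agree near 0
  have h1 : ∀ᶠ t : ℝ in nhds 0, u + t ∈ Set.Ioo aI bI := by
    have hc : ContinuousAt (fun t : ℝ => u + t) 0 := by fun_prop
    have := hc.preimage_mem_nhds (isOpen_Ioo.mem_nhds (by simpa using hu))
    exact this
  have h2 : ∀ᶠ t : ℝ in nhds 0, v - t ∈ Set.Ioo aJ bJ := by
    have hc : ContinuousAt (fun t : ℝ => v - t) 0 := by fun_prop
    have := hc.preimage_mem_nhds (isOpen_Ioo.mem_nhds (by simpa using hv))
    exact this
  have hEq : (fun t =>
      (X (u + t) + Y (v - t)) * deriv Z w + (deriv X (u + t) + deriv Y (v - t)) * Z w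
        + deriv X (u + t) * Y (v - t) + X (u + t) * deriv Y (v - t)) =ᶠ[nhds (0:ℝ)]
      (fun t => -4 * H * (X (u + t) + Y (v - t) + Z w) ^ ((3:ℝ)/2)) := by
    filter_upwards [h1, h2] with t ht1 ht2
    exact heq (u + t) ht1 (v - t) ht2 w hw (by linarith)
  have hF' : HasDerivAt (fun t =>
      (X (u + t) + Y (v - t)) * deriv Z w + (deriv X (u + t) + deriv Y (v - t)) * Z w
        + deriv X (u + t) * Y (v - t) + X (u + t) * deriv Y (v - t))
      (-6 * H * (deriv X u - deriv Y v) * (X u + Y v + Z w) ^ ((1:ℝ)/2)) 0 :=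
    hG.congr_of_eventuallyEq hEq
  exact hF.unique hF'
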